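/- For an element x of the Boolean algebra ℬ the following are equivalent: (i) U_g x U_g* = x for every permutation g of ℤ moving only finitely many elements; (ii) U x U* = x where U is the shift unitary; (iii) there exist α, β ∈ ℂ with x = α·P_# + β·(1 − P_#). In other words, the fixed point algebra of ℬ under the permutation action coincides with the one under the shift action and equals ℂP_# ⊕ ℂP_#^⊥. -/

import Mathlib

noncomputable section

/-- The Hilbert space `ℓ²({#} ∪ ℤ)`, with `#` encoded as `none : Option ℤ`. -/
abbrev BooleanSpace : Type := lp (fun _ : Option ℤ => ℂ) 2

/-- The canonical orthonormal basis vectors `e_x`, `x ∈ {#} ∪ ℤ`;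
`e none` is the vacuum vector `e_#`. -/
def e (x : Option ℤ) : BooleanSpace := lp.single 2 x (1 : ℂ)

/-- The Boolean algebra `ℬ = {k + c·1 : k compact, c ∈ ℂ}`, as a subset of `B(H)`. -/
def BooleanAlgebraSet : Set (BooleanSpace →L[ℂ] BooleanSpace) :=
  {T | ∃ k : BooleanSpace →L[ℂ] BooleanSpace, IsCompactOperator ⇑k ∧
    ∃ c : ℂ, T = k + c • 1}

/-- The orthogonal projection `P_#` of `ℓ²({#} ∪ ℤ)` onto `ℂ e_#`. -/
def vacuumProjection : BooleanSpace →L[ℂ] BooleanSpace :=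
  (innerSL ℂ (e none)).smulRight (e none)

/-- `V` is the unitary of `ℓ²({#} ∪ ℤ)` implementing the permutation `g` of `ℤ`
(fixing the vacuum). -/
def ImplementsPerm (g : Equiv.Perm ℤ) (V : BooleanSpace →L[ℂ] BooleanSpace) : Prop :=
  V * ContinuousLinearMap.adjoint V = 1 ∧ ContinuousLinearMap.adjoint V * V = 1 ∧
    (∀ i : ℤ, V (e (some i)) = e (some (g i))) ∧ V (e none) = e none

/-- `V` is the shift unitary of `ℓ²({#} ∪ ℤ)`: `V e_i = e_{i+1}` and `V e_# = e_#`. -/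
def IsShiftUnitary (V : BooleanSpace →L[ℂ] BooleanSpace) : Prop :=
  V * ContinuousLinearMap.adjoint V = 1 ∧ ContinuousLinearMap.adjoint V * V = 1 ∧
    (∀ i : ℤ, V (e (some i)) = e (some (i + 1))) ∧ V (e none) = e none

namespace BFP
open Filter Topology ContinuousLinearMap
open scoped ENNReal

local notation "⟪" x ", " y "⟫" => @inner ℂ _ _ x y

lemma two_pos : 0 < (2 : ℝ≥0∞).toReal := by norm_num

lemma norm_e (x : Option ℤ) : ‖e x‖ = 1 := by
  have := lp.norm_single (E := fun _ : Option ℤ => ℂ) (p := 2) (by norm_num) x (1:ℂ)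
  simpa [e] using this

lemma memℓp_comp_equiv (σ : Option ℤ ≃ Option ℤ) (f : BooleanSpace) :
    Memℓp (fun x => f (σ x)) 2 := by
  have h := lp.memℓp f
  rw [memℓp_gen_iff two_pos] at h ⊢
  exact (σ.summable_iff (f := fun i => ‖f i‖ ^ (2:ℝ≥0∞).toReal)).2 h

def reindex (σ : Option ℤ ≃ Option ℤ) : BooleanSpace ≃ₗᵢ[ℂ] BooleanSpace where
  toFun f := ⟨fun x => f (σ.symm x), memℓp_comp_equiv σ.symm f⟩
  invFun f := ⟨fun x => f (σ x), memℓp_comp_equiv σ f⟩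
  left_inv f := lp.ext (funext fun x => by simp)
  right_inv f := lp.ext (funext fun x => by simp)
  map_add' f g := lp.ext (funext fun x => by
    simp [lp.coeFn_add]; rfl)
  map_smul' c f := lp.ext (funext fun x => by
    simp [lp.coeFn_smul])
  norm_map' f := by
    show ‖(⟨fun x => f (σ.symm x), memℓp_comp_equiv σ.symm f⟩ : BooleanSpace)‖ = ‖f‖
    rw [lp.norm_eq_tsum_rpow two_pos, lp.norm_eq_tsum_rpow two_pos]
    congr 1
    exact σ.symm.tsum_eq (fun x => ‖f x‖ ^ (2:ℝ≥0∞).toReal)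

end BFP

namespace BFP

local notation "⟪" x ", " y "⟫" => @inner ℂ _ _ x y

def W (σ : Option ℤ ≃ Option ℤ) : BooleanSpace →L[ℂ] BooleanSpace :=
  (reindex σ).toLinearIsometry.toContinuousLinearMap

lemma W_apply (σ : Option ℤ ≃ Option ℤ) (f : BooleanSpace) (x : Option ℤ) :
    W σ f x = f (σ.symm x) := rfl

lemma W_e (σ : Option ℤ ≃ Option ℤ) (y : Option ℤ) : W σ (e y) = e (σ y) := by
  apply lp.ext; funext x
  show (e y) (σ.symm x) = (e (σ y)) x
  by_cases hx : x = σ y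
  · subst hx
    rw [e, e, lp.single_apply_self]
    rw [show σ.symm (σ y) = y by simp, lp.single_apply_self]
  · rw [e, e, lp.single_apply_ne _ _ _ hx, lp.single_apply_ne]
    intro h
    exact hx (by simpa using congrArg σ h)

lemma W_inner (σ : Option ℤ ≃ Option ℤ) (f g : BooleanSpace) :
    ⟪W σ f, W σ g⟫ = ⟪f, g⟫ := (reindex σ).inner_map_map f g

lemma W_adjoint (σ : Option ℤ ≃ Option ℤ) :
    ContinuousLinearMap.adjoint (W σ) = W σ.symm := by
  refine ((ContinuousLinearMap.eq_adjoint_iff _ _).2 fun f g => ?_).symm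
  rw [lp.inner_eq_tsum, lp.inner_eq_tsum]
  rw [← σ.tsum_eq (fun i => ⟪f i, (W σ g) i⟫)]
  congr 1; funext i
  rw [W_apply, W_apply]
  simp

lemma W_mul_W_symm (σ : Option ℤ ≃ Option ℤ) : W σ * W σ.symm = 1 := by
  refine ContinuousLinearMap.ext fun f => lp.ext (funext fun x => ?_)
  show f (σ.symm.symm (σ.symm x)) = f x
  simp

lemma W_unitary₁ (σ : Option ℤ ≃ Option ℤ) :
    W σ * ContinuousLinearMap.adjoint (W σ) = 1 := by
  rw [W_adjoint]; exact W_mul_W_symm σ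

lemma W_unitary₂ (σ : Option ℤ ≃ Option ℤ) :
    ContinuousLinearMap.adjoint (W σ) * W σ = 1 := by
  rw [W_adjoint]
  have := W_mul_W_symm σ.symm
  simpa using this

end BFP

namespace BFP
open Filter Topology
open scoped ENNReal
local notation "⟪" x ", " y "⟫" => @inner ℂ _ _ x y

lemma inner_e_left (x : Option ℤ) (f : BooleanSpace) : ⟪e x, f⟫ = f x := by
  rw [e, lp.inner_single_left]
  simp

lemma inner_e_e (p r : Option ℤ) : ⟪e p, e r⟫ = if p = r then 1 else 0 := by
  rw [inner_e_left]
  by_cases h : p = r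
  · subst h; rw [e, lp.single_apply_self, if_pos rfl]
  · rw [e, lp.single_apply_ne _ _ _ h, if_neg h]

lemma coeff_tendsto (f : BooleanSpace) :
    Tendsto (fun x => f x) cofinite (𝓝 (0 : ℂ)) := by
  have h : Summable fun i => ‖f i‖ ^ (2:ℝ≥0∞).toReal := (lp.memℓp f).summable two_pos
  have h2 := h.tendsto_cofinite_zero
  rw [tendsto_zero_iff_norm_tendsto_zero]
  have h3 : Tendsto (fun i => Real.sqrt (‖f i‖ ^ (2:ℝ≥0∞).toReal)) cofinite (𝓝 (Real.sqrt 0)) :=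
    (Real.continuous_sqrt.tendsto 0).comp h2
  have h4 : ∀ i, Real.sqrt (‖f i‖ ^ (2:ℝ≥0∞).toReal) = ‖f i‖ := by
    intro i
    rw [show ((2:ℝ≥0∞).toReal) = (2:ℝ) by norm_num, Real.rpow_two, Real.sqrt_sq (norm_nonneg _)]
  simpa [h4] using h3

lemma inner_e_tendsto (f : BooleanSpace) {u : ℕ → Option ℤ} (hu : Function.Injective u) :
    Tendsto (fun n => ⟪e (u n), f⟫) atTop (𝓝 (0 : ℂ)) := by
  have h2 : Tendsto u atTop (cofinite : Filter (Option ℤ)) := by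
    rw [← Nat.cofinite_eq_atTop]; exact hu.tendsto_cofinite
  have := (coeff_tendsto f).comp h2
  refine this.congr fun n => ?_
  exact (inner_e_left (u n) f).symm

set_option synthInstance.maxHeartbeats 1000000 in
lemma compact_subseq (k : BooleanSpace →L[ℂ] BooleanSpace) (hk : IsCompactOperator ⇑k)
    {u : ℕ → Option ℤ} (hu : Function.Injective u) :
    ∃ φ : ℕ → ℕ, StrictMono φ ∧ Tendsto (fun n => ‖k (e (u (φ n)))‖) atTop (𝓝 (0:ℝ)) := by
  have hk' : IsCompactOperator ⇑(k.toLinearMap) := by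
    rwa [ContinuousLinearMap.coe_coe]
  obtain ⟨K, hK, hsub⟩ := hk'.image_closedBall_subset_compact (𝕜₁ := ℂ) 1
  have hmem : ∀ n, k (e (u n)) ∈ K := fun n =>
    hsub ⟨e (u n), by simp [Metric.mem_closedBall, norm_e], rfl⟩
  obtain ⟨v, _, φ, hφ, hconv⟩ := hK.tendsto_subseq hmem
  have hv0 : v = 0 := by
    have h1 : Tendsto (fun n => ⟪v, k (e (u (φ n)))⟫) atTop (𝓝 ⟪v, v⟫) :=
      tendsto_const_nhds.inner hconv
    have h2 : Tendsto (fun n => ⟪v, k (e (u (φ n)))⟫) atTop (𝓝 (0:ℂ)) := by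
      have h3 : Tendsto (fun n => ⟪e (u (φ n)), ContinuousLinearMap.adjoint k v⟫)
          atTop (𝓝 (0:ℂ)) :=
        inner_e_tendsto _ (hu.comp hφ.injective)
      have h4 := ((Complex.continuous_conj.tendsto 0).comp h3)
      have h5 : ((starRingEnd ℂ) 0 : ℂ) = 0 := by simp
      rw [h5] at h4
      refine h4.congr fun n => ?_
      show (starRingEnd ℂ) ⟪e (u (φ n)), ContinuousLinearMap.adjoint k v⟫ = _
      rw [← inner_conj_symm, ContinuousLinearMap.adjoint_inner_left]
      simp
    have := tendsto_nhds_unique h1 h2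
    exact inner_self_eq_zero.1 this
  refine ⟨φ, hφ, ?_⟩
  have := hconv.norm
  rw [hv0] at this
  simpa using this

lemma const_eq_zero (k : BooleanSpace →L[ℂ] BooleanSpace) (hk : IsCompactOperator ⇑k)
    {c : ℂ} {u : ℕ → Option ℤ} (hu : Function.Injective u)
    (hb : ∀ n, ‖c‖ ≤ ‖k (e (u n))‖) : c = 0 := by
  obtain ⟨φ, hφ, hT⟩ := compact_subseq k hk hu
  have : ‖c‖ ≤ 0 := ge_of_tendsto hT (Filter.Eventually.of_forall fun n => hb (φ n))
  simpa using le_antisymm this (norm_nonneg c)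

lemma entry_bound (k : BooleanSpace →L[ℂ] BooleanSpace) (p r : Option ℤ) :
    ‖(⟪e p, k (e r)⟫ : ℂ)‖ ≤ ‖k (e r)‖ := by
  have := norm_inner_le_norm (𝕜 := ℂ) (e p) (k (e r))
  simpa [norm_e] using this

lemma entry_invariant {V x : BooleanSpace →L[ℂ] BooleanSpace}
    (h2 : ContinuousLinearMap.adjoint V * V = 1) (hx : V * x * ContinuousLinearMap.adjoint V = x)
    {p q r s : Option ℤ} (hp : V (e p) = e q) (hr : V (e r) = e s) :
    ⟪e q, x (e s)⟫ = ⟪e p, x (e r)⟫ := by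
  have key : ∀ t w : Option ℤ, V (e t) = e w → ContinuousLinearMap.adjoint V (e w) = e t := by
    intro t w h
    rw [← h]
    have := congrArg (fun T => T (e t)) h2
    simpa [ContinuousLinearMap.mul_apply] using this
  have hx' : ∀ w, V (x (ContinuousLinearMap.adjoint V w)) = x w := fun w => by
    have := congrArg (fun T => T w) hx
    simpa [ContinuousLinearMap.mul_apply] using this
  calc ⟪e q, x (e s)⟫ = ⟪e q, V (x (ContinuousLinearMap.adjoint V (e s)))⟫ := by
        rw [hx' (e s)]
      _ = ⟪ContinuousLinearMap.adjoint V (e q), x (ContinuousLinearMap.adjoint V (e s))⟫ :=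
        (ContinuousLinearMap.adjoint_inner_left V _ _).symm
      _ = ⟪e p, x (e r)⟫ := by rw [key p q hp, key r s hr]

lemma clm_ext_inner {S T : BooleanSpace →L[ℂ] BooleanSpace}
    (h : ∀ p r : Option ℤ, ⟪e p, S (e r)⟫ = ⟪e p, T (e r)⟫) : S = T := by
  have hvec : ∀ r, S (e r) = T (e r) := by
    intro r
    apply lp.ext; funext p
    have := h p r
    rwa [inner_e_left, inner_e_left] at this
  refine ContinuousLinearMap.ext fun f => ?_
  have h1 : HasSum (fun i : Option ℤ => lp.single 2 i (f i)) f :=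
    lp.hasSum_single (by norm_num) f
  have hsingle : ∀ i, lp.single 2 i (f i) = f i • e i := by
    intro i
    rw [e, ← lp.single_smul]
    norm_num
  have hS : HasSum (fun i => S (lp.single 2 i (f i))) (S f) := h1.mapL S
  have hT : HasSum (fun i => T (lp.single 2 i (f i))) (T f) := h1.mapL T
  refine hS.unique (hT.congr_fun fun i => ?_)
  rw [hsingle i, map_smul, map_smul, hvec i]

end BFP

namespace BFP
open Filter Topology
local notation "⟪" x ", " y "⟫" => @inner ℂ _ _ x y

lemma vacuum_apply (f : BooleanSpace) : vacuumProjection f = ⟪e none, f⟫ • e none := by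
  simp [vacuumProjection]

/-- entries of `λ • P + β`-type operators -/
lemma k_form (k : BooleanSpace →L[ℂ] BooleanSpace)
    (hsome : ∀ a b : ℤ, ⟪e (some a), k (e (some b))⟫ = 0)
    (hns : ∀ b : ℤ, ⟪e none, k (e (some b))⟫ = 0)
    (hsn : ∀ a : ℤ, ⟪e (some a), k (e none)⟫ = 0) :
    k = ⟪e none, k (e none)⟫ • vacuumProjection := by
  apply clm_ext_inner
  intro p r
  have hrhs : (⟪e none, k (e none)⟫ • vacuumProjection) (e r)
      = ⟪e none, k (e none)⟫ • (⟪e none, e r⟫ • e none) := by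
    simp [vacuum_apply]
  rw [hrhs, inner_smul_right, inner_smul_right]
  match p, r with
  | Option.none, Option.none => simp [inner_e_e, norm_e]
  | Option.none, Option.some b => rw [hns b]; simp [inner_e_e]
  | Option.some a, Option.none => rw [hsn a]; simp [inner_e_e]
  | Option.some a, Option.some b => rw [hsome a b]; simp [inner_e_e]

lemma invariance_of_form (α β : ℂ) (V : BooleanSpace →L[ℂ] BooleanSpace)
    (hV1 : V * ContinuousLinearMap.adjoint V = 1) (hVe : V (e none) = e none) :
    V * (α • vacuumProjection + β • (1 - vacuumProjection)) * ContinuousLinearMap.adjoint V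
      = α • vacuumProjection + β • (1 - vacuumProjection) := by
  have hP : V * vacuumProjection * ContinuousLinearMap.adjoint V = vacuumProjection := by
    refine ContinuousLinearMap.ext fun f => ?_
    have h1 : (V * vacuumProjection * ContinuousLinearMap.adjoint V) f
        = ⟪e none, ContinuousLinearMap.adjoint V f⟫ • V (e none) := by
      simp [ContinuousLinearMap.mul_apply, vacuum_apply]
    rw [h1, hVe, ContinuousLinearMap.adjoint_inner_right, hVe, ← vacuum_apply]
  have expand : V * (α • vacuumProjection + β • (1 - vacuumProjection))
        * ContinuousLinearMap.adjoint V
      = α • (V * vacuumProjection * ContinuousLinearMap.adjoint V)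
        + β • (V * ContinuousLinearMap.adjoint V
            - V * vacuumProjection * ContinuousLinearMap.adjoint V) := by
    simp only [mul_add, add_mul, mul_sub, sub_mul, mul_smul_comm, smul_mul_assoc, mul_one, one_mul]
  rw [expand, hP, hV1]

lemma cancel_const {k x : BooleanSpace →L[ℂ] BooleanSpace} {c : ℂ}
    {V : BooleanSpace →L[ℂ] BooleanSpace}
    (hV1 : V * ContinuousLinearMap.adjoint V = 1)
    (hxk : x = k + c • 1)
    (hfix : V * x * ContinuousLinearMap.adjoint V = x) :
    V * k * ContinuousLinearMap.adjoint V = k := by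
  have h1 : V * x * ContinuousLinearMap.adjoint V
      = V * k * ContinuousLinearMap.adjoint V + c • 1 := by
    rw [hxk]
    simp only [mul_add, add_mul, mul_smul_comm, smul_mul_assoc, mul_one, one_mul]
    rw [hV1]
  rw [h1, hxk] at hfix
  exact add_right_cancel hfix

end BFP

namespace BFP
open Filter Topology
local notation "⟪" x ", " y "⟫" => @inner ℂ _ _ x y

lemma implements_W (g : Equiv.Perm ℤ) : ImplementsPerm g (W (Equiv.optionCongr g)) :=
  ⟨W_unitary₁ _, W_unitary₂ _,
    fun i => by rw [W_e]; rfl,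
    by rw [W_e]; rfl⟩

lemma shift_W : IsShiftUnitary (W (Equiv.optionCongr (Equiv.addRight (1:ℤ)))) :=
  ⟨W_unitary₁ _, W_unitary₂ _,
    fun i => by rw [W_e]; simp,
    by rw [W_e]; rfl⟩

lemma swap_support_finite (a b : ℤ) : {i : ℤ | Equiv.swap a b i ≠ i}.Finite := by
  apply Set.Finite.subset ((Set.finite_singleton b).insert a)
  intro i hi
  by_contra h
  simp only [Set.mem_insert_iff, Set.mem_singleton_iff, not_or] at h
  exact hi (Equiv.swap_apply_of_ne_of_ne h.1 h.2)

lemma mul_support_finite (f g : Equiv.Perm ℤ) (hf : {i : ℤ | f i ≠ i}.Finite)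
    (hg : {i : ℤ | g i ≠ i}.Finite) : {i : ℤ | (f * g) i ≠ i}.Finite := by
  apply Set.Finite.subset (hf.union hg)
  intro i hi
  by_contra h
  simp only [Set.mem_union, Set.mem_setOf_eq, not_or, not_not] at h
  exact hi (by simp [Equiv.Perm.mul_apply, h.1, h.2])

lemma entry_zero (k : BooleanSpace →L[ℂ] BooleanSpace) (hk : IsCompactOperator ⇑k)
    {cst : ℂ} {v : ℕ → Option ℤ} {u : ℕ → ℤ} (hu : Function.Injective u)
    (h : ∀ n, cst = ⟪e (v n), k (e (some (u n)))⟫) : cst = 0 := by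
  refine const_eq_zero k hk (u := fun n => some (u n))
    (fun n m h' => hu (by simpa using h')) fun n => ?_
  rw [h n]
  exact entry_bound k (v n) (some (u n))

lemma entry_zero_left (k : BooleanSpace →L[ℂ] BooleanSpace)
    {cst : ℂ} {u : ℕ → ℤ} (hu : Function.Injective u)
    (h : ∀ n, cst = ⟪e (some (u n)), k (e none)⟫) : cst = 0 := by
  have h1 : Tendsto (fun n => (⟪e (some (u n)), k (e none)⟫ : ℂ)) atTop (𝓝 0) :=
    inner_e_tendsto (k (e none)) (fun n m h' => hu (by simpa using h'))
  have h2 : Tendsto (fun _ : ℕ => cst) atTop (𝓝 (0:ℂ)) := h1.congr fun n => (h n).symm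
  exact tendsto_nhds_unique tendsto_const_nhds h2

lemma conclude (k : BooleanSpace →L[ℂ] BooleanSpace) (c : ℂ)
    (hsome : ∀ a b : ℤ, ⟪e (some a), k (e (some b))⟫ = 0)
    (hns : ∀ b : ℤ, ⟪e none, k (e (some b))⟫ = 0)
    (hsn : ∀ a : ℤ, ⟪e (some a), k (e none)⟫ = 0) :
    ∃ α β : ℂ, k + c • 1 = α • vacuumProjection + β • (1 - vacuumProjection) := by
  have hkf := k_form k hsome hns hsn
  set lam := (⟪e none, k (e none)⟫ : ℂ) with hl
  refine ⟨lam + c, c, ?_⟩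
  rw [hkf, add_smul, smul_sub]
  abel

end BFP

namespace BFP
open Filter Topology
local notation "⟪" x ", " y "⟫" => @inner ℂ _ _ x y

lemma shift_forward (k : BooleanSpace →L[ℂ] BooleanSpace) (hk : IsCompactOperator ⇑k)
    (hstep : ∀ p r : Option ℤ,
      ⟪e ((Equiv.optionCongr (Equiv.addRight (1:ℤ))) p),
        k (e ((Equiv.optionCongr (Equiv.addRight (1:ℤ))) r))⟫ = ⟪e p, k (e r)⟫) :
    (∀ a b : ℤ, ⟪e (some a), k (e (some b))⟫ = 0) ∧
      (∀ b : ℤ, ⟪e none, k (e (some b))⟫ = 0) ∧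
      (∀ a : ℤ, ⟪e (some a), k (e none)⟫ = 0) := by
  have hS : ∀ a b : ℤ, ⟪e (some (a+1)), k (e (some (b+1)))⟫ = ⟪e (some a), k (e (some b))⟫ :=
    fun a b => by simpa using hstep (some a) (some b)
  have hSR : ∀ b : ℤ, ⟪e none, k (e (some (b+1)))⟫ = ⟪e none, k (e (some b))⟫ :=
    fun b => by simpa using hstep none (some b)
  have hSL : ∀ a : ℤ, ⟪e (some (a+1)), k (e none)⟫ = ⟪e (some a), k (e none)⟫ :=
    fun a => by simpa using hstep (some a) none
  have hIT : ∀ (n : ℕ) (a b : ℤ),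
      ⟪e (some (a+(n:ℤ))), k (e (some (b+(n:ℤ))))⟫ = ⟪e (some a), k (e (some b))⟫ := by
    intro n
    induction n with
    | zero => intro a b; norm_num
    | succ m ih =>
        intro a b
        rw [show (a + ((m+1:ℕ):ℤ)) = (a + (m:ℕ)) + 1 by push_cast; ring,
          show (b + ((m+1:ℕ):ℤ)) = (b + (m:ℕ)) + 1 by push_cast; ring, hS, ih]
  have hITR : ∀ (n : ℕ) (b : ℤ),
      ⟪e none, k (e (some (b+(n:ℤ))))⟫ = ⟪e none, k (e (some b))⟫ := by
    intro n
    induction n with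
    | zero => intro b; norm_num
    | succ m ih =>
        intro b
        rw [show (b + ((m+1:ℕ):ℤ)) = (b + (m:ℕ)) + 1 by push_cast; ring, hSR, ih]
  have hITL : ∀ (n : ℕ) (a : ℤ),
      ⟪e (some (a+(n:ℤ))), k (e none)⟫ = ⟪e (some a), k (e none)⟫ := by
    intro n
    induction n with
    | zero => intro a; norm_num
    | succ m ih =>
        intro a
        rw [show (a + ((m+1:ℕ):ℤ)) = (a + (m:ℕ)) + 1 by push_cast; ring, hSL, ih]
  refine ⟨fun a b => ?_, fun b => ?_, fun a => ?_⟩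
  · exact entry_zero k hk (v := fun n => some (a+(n:ℤ))) (u := fun n => b+(n:ℤ))
      (fun n m h => by have := add_left_cancel h; exact_mod_cast this) (fun n => (hIT n a b).symm)
  · exact entry_zero k hk (v := fun _ => none) (u := fun n => b+(n:ℤ))
      (fun n m h => by have := add_left_cancel h; exact_mod_cast this) (fun n => (hITR n b).symm)
  · exact entry_zero_left k (u := fun n => a+(n:ℤ))
      (fun n m h => by have := add_left_cancel h; exact_mod_cast this) (fun n => (hITL n a).symm)

end BFP

namespace BFP
open Filter Topology
local notation "⟪" x ", " y "⟫" => @inner ℂ _ _ x y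

lemma perm_forward (k : BooleanSpace →L[ℂ] BooleanSpace) (hk : IsCompactOperator ⇑k)
    (hke : ∀ g : Equiv.Perm ℤ, {i : ℤ | g i ≠ i}.Finite → ∀ p r : Option ℤ,
      ⟪e (Option.map g p), k (e (Option.map g r))⟫ = ⟪e p, k (e r)⟫) :
    (∀ a b : ℤ, ⟪e (some a), k (e (some b))⟫ = 0) ∧
      (∀ b : ℤ, ⟪e none, k (e (some b))⟫ = 0) ∧
      (∀ a : ℤ, ⟪e (some a), k (e none)⟫ = 0) := by
  refine ⟨fun a b => ?_, fun b => ?_, fun a => ?_⟩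
  · by_cases hab : a = b
    · subst hab
      refine entry_zero k hk (v := fun n => some (|a|+1+(n:ℤ))) (u := fun n => |a|+1+(n:ℤ))
        (fun n m h => by have := add_left_cancel h; exact_mod_cast this) (fun n => ?_)
      have h1 := hke (Equiv.swap a (|a|+1+(n:ℤ))) (swap_support_finite _ _) (some a) (some a)
      simpa [Equiv.swap_apply_left] using h1.symm
    · have haA := le_abs_self a
      have haA' := abs_nonneg a
      have hbB := le_abs_self b
      have hbB' := abs_nonneg b
      set A := |a| with hA
      set B := |b| with hB
      refine entry_zero k hk (v := fun n => some (A+B+1+2*(n:ℤ)))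
        (u := fun n => A+B+2+2*(n:ℤ))
        (fun n m h => by
          have h' : A+B+2+2*(n:ℤ) = A+B+2+2*(m:ℤ) := h
          have : (n:ℤ) = (m:ℤ) := by omega
          exact_mod_cast this) (fun n => ?_)
      set t := A+B+1+2*(n:ℤ) with ht
      set u' := A+B+2+2*(n:ℤ) with hu'
      have hn0 : (0:ℤ) ≤ (n:ℤ) := Int.natCast_nonneg n
      have htb : t ≠ b := by omega
      have htu : t ≠ u' := by omega
      have hba : b ≠ a := Ne.symm hab
      have hbt : b ≠ t := by omega
      set g : Equiv.Perm ℤ := Equiv.swap b u' * Equiv.swap a t with hg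
      have hga : g a = t := by
        rw [hg, Equiv.Perm.mul_apply, Equiv.swap_apply_left,
          Equiv.swap_apply_of_ne_of_ne htb htu]
      have hgb : g b = u' := by
        rw [hg, Equiv.Perm.mul_apply, Equiv.swap_apply_of_ne_of_ne hba hbt,
          Equiv.swap_apply_left]
      have h1 := hke g
        (mul_support_finite _ _ (swap_support_finite _ _) (swap_support_finite _ _))
        (some a) (some b)
      simpa [hga, hgb] using h1.symm
  · refine entry_zero k hk (v := fun _ => none) (u := fun n => |b|+1+(n:ℤ))
      (fun n m h => by have := add_left_cancel h; exact_mod_cast this) (fun n => ?_)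
    have h1 := hke (Equiv.swap b (|b|+1+(n:ℤ))) (swap_support_finite _ _) none (some b)
    simpa [Equiv.swap_apply_left] using h1.symm
  · refine entry_zero_left k (u := fun n => |a|+1+(n:ℤ))
      (fun n m h => by have := add_left_cancel h; exact_mod_cast this) (fun n => ?_)
    have h1 := hke (Equiv.swap a (|a|+1+(n:ℤ))) (swap_support_finite _ _) (some a) none
    simpa [Equiv.swap_apply_left] using h1.symm

end BFP

/-- for `x ∈ ℬ` the following are equivalent: (i) `U_g x U_g* = x` for
all finite permutations `g` of `ℤ`; (ii) `U x U* = x` for the shift `U`;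
(iii) `x = α P_# + β (1 - P_#)` for some `α, β ∈ ℂ`. In particular the fixed point
algebras of `ℬ` under the permutations and under the shift coincide and are equal to
`ℂ P_# ⊕ ℂ P_#^⊥`. -/
theorem boolean_fixedPoint_algebra (x : BooleanSpace →L[ℂ] BooleanSpace)
    (hx : x ∈ BooleanAlgebraSet) :
    ((∀ g : Equiv.Perm ℤ, {i : ℤ | g i ≠ i}.Finite →
        ∀ V : BooleanSpace →L[ℂ] BooleanSpace, ImplementsPerm g V →
          V * x * ContinuousLinearMap.adjoint V = x)
      ↔ (∃ α β : ℂ, x = α • vacuumProjection + β • (1 - vacuumProjection)))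
    ∧
    ((∀ V : BooleanSpace →L[ℂ] BooleanSpace, IsShiftUnitary V →
        V * x * ContinuousLinearMap.adjoint V = x)
      ↔ (∃ α β : ℂ, x = α • vacuumProjection + β • (1 - vacuumProjection))) := by
  obtain ⟨k, hk, c, rfl⟩ := hx
  constructor
  · constructor
    · intro hinv
      have hke : ∀ g : Equiv.Perm ℤ, {i : ℤ | g i ≠ i}.Finite → ∀ p r : Option ℤ,
          @inner ℂ _ _ (e (Option.map g p)) (k (e (Option.map g r)))
            = @inner ℂ _ _ (e p) (k (e r)) := by
        intro g hg p r
        have hV := BFP.implements_W g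
        have hfix := hinv g hg _ hV
        have hkfix := BFP.cancel_const hV.1 rfl hfix
        exact BFP.entry_invariant hV.2.1 hkfix (BFP.W_e _ p) (BFP.W_e _ r)
      obtain ⟨h1, h2, h3⟩ := BFP.perm_forward k hk hke
      exact BFP.conclude k c h1 h2 h3
    · rintro ⟨α, β, hform⟩ g hg V hV
      rw [hform]
      exact BFP.invariance_of_form α β V hV.1 hV.2.2.2
  · constructor
    · intro hinv
      have hV := BFP.shift_W
      have hfix := hinv _ hV
      have hkfix := BFP.cancel_const hV.1 rfl hfix
      have hstep : ∀ p r : Option ℤ,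
          @inner ℂ _ _ (e ((Equiv.optionCongr (Equiv.addRight (1:ℤ))) p))
              (k (e ((Equiv.optionCongr (Equiv.addRight (1:ℤ))) r)))
            = @inner ℂ _ _ (e p) (k (e r)) :=
        fun p r => BFP.entry_invariant hV.2.1 hkfix (BFP.W_e _ p) (BFP.W_e _ r)
      obtain ⟨h1, h2, h3⟩ := BFP.shift_forward k hk hstep
      exact BFP.conclude k c h1 h2 h3
    · rintro ⟨α, β, hform⟩ V hV
      rw [hform]
      exact BFP.invariance_of_form α β V hV.1 hV.2.2.2
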